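/- Let U and M be finite-dimensional real vector spaces, Q : U → U* a symmetric linear map, A : U → M a linear map, and fix λ ∈ M*. Define L = {(δp, δq) ∈ M* × M : ∃ δu ∈ U, A δu = δq and Q δu = A* δp} (i.e. ⟨Q δu, w⟩ = ⟨δp, A w⟩ for all w ∈ U). Then L is a Lagrangian subspace of M* × M with symplectic form σ((δp₁,δq₁),(δp₂,δq₂)) = ⟨δp₁, δq₂⟩ − ⟨δp₂, δq₁⟩. -/

import Mathlib

open Module

/-- The linearized Lagrange-multiplier space
`L = {(δp, δq) : ∃ δu, A δu = δq and Q δu = A* δp}` of a constrained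
optimization problem with Hessian `Q` and constraint differential `A`. -/
def Lspace {U M : Type*} [AddCommGroup U] [Module ℝ U]
    [AddCommGroup M] [Module ℝ M]
    (Q : U →ₗ[ℝ] Module.Dual ℝ U) (A : U →ₗ[ℝ] M) :
    Submodule ℝ (Module.Dual ℝ M × M) where
  carrier := {x | ∃ δu : U, A δu = x.2 ∧ ∀ w : U, Q δu w = x.1 (A w)}
  add_mem' := by
    rintro ⟨p₁, q₁⟩ ⟨p₂, q₂⟩ ⟨u₁, hu₁, hq₁⟩ ⟨u₂, hu₂, hq₂⟩
    exact ⟨u₁ + u₂, by simp [hu₁, hu₂], fun w => by simp [hq₁ w, hq₂ w]⟩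
  zero_mem' := ⟨0, by simp, fun w => by simp⟩
  smul_mem' := by
    rintro c ⟨p, q⟩ ⟨u, hu, hq⟩
    exact ⟨c • u, by simp [hu], fun w => by simp [hq w]⟩

section Aux

variable {U M : Type*} [AddCommGroup U] [Module ℝ U]
  [AddCommGroup M] [Module ℝ M]
  (Q : U →ₗ[ℝ] Module.Dual ℝ U) (A : U →ₗ[ℝ] M)
  (eU : U ≃ₗ[ℝ] Module.Dual ℝ U) (eM : M ≃ₗ[ℝ] Module.Dual ℝ M)

/-- Auxiliary map `(m, u) ↦ eU⁻¹ (Q u - Aᵀ (eM m))`. -/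
private noncomputable def PhiMap : M × U →ₗ[ℝ] U :=
  (eU.symm.toLinearMap).comp
    (Q.comp (LinearMap.snd ℝ _ _)
      - (A.dualMap.comp eM.toLinearMap).comp (LinearMap.fst ℝ _ _))

private lemma mem_ker_PhiMap (m : M) (u : U) :
    (m, u) ∈ LinearMap.ker (PhiMap Q A eU eM) ↔ Q u = A.dualMap (eM m) := by
  rw [LinearMap.mem_ker]
  constructor
  · intro h
    have := congrArg eU h
    simpa [PhiMap, sub_eq_zero] using this
  · intro h
    simp [PhiMap, h]

/-- Auxiliary map `ker Φ → M × M`, `(m, u) ↦ (m, A u)`. -/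
private noncomputable def PsiMap : LinearMap.ker (PhiMap Q A eU eM) →ₗ[ℝ] M × M :=
  ((LinearMap.fst ℝ _ _).prod (A.comp (LinearMap.snd ℝ _ _))).comp
    (LinearMap.ker (PhiMap Q A eU eM)).subtype

private lemma range_PhiMap :
    LinearMap.range (PhiMap Q A eU eM)
      = Submodule.map eU.symm.toLinearMap
          (LinearMap.range Q ⊔ LinearMap.range A.dualMap) := by
  ext f
  simp only [Submodule.mem_map]
  constructor
  · rintro ⟨⟨m, u⟩, rfl⟩
    refine ⟨Q u - A.dualMap (eM m), ?_, rfl⟩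
    rw [Submodule.mem_sup]
    exact ⟨Q u, LinearMap.mem_range_self _ _, -(A.dualMap (eM m)),
      neg_mem (LinearMap.mem_range_self _ _), by abel⟩
  · rintro ⟨g, hg, rfl⟩
    rw [Submodule.mem_sup] at hg
    obtain ⟨y, ⟨u, rfl⟩, z, ⟨p, rfl⟩, rfl⟩ := hg
    refine ⟨(-eM.symm p, u), ?_⟩
    simp [PhiMap, sub_eq_add_neg]

private lemma range_PsiMap :
    Submodule.map (eM.prodCongr (LinearEquiv.refl ℝ M)).toLinearMap
      (LinearMap.range (PsiMap Q A eU eM)) = Lspace Q A := by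
  ext ⟨p, q⟩
  simp only [Submodule.mem_map]
  constructor
  · rintro ⟨-, ⟨⟨⟨m, u⟩, hker⟩, rfl⟩, heq⟩
    rw [mem_ker_PhiMap] at hker
    obtain ⟨hp, hq⟩ : eM m = p ∧ A u = q := by
      simpa [PsiMap, Prod.ext_iff] using heq
    refine ⟨u, hq, fun w => ?_⟩
    rw [← hp]
    have := congrFun (congrArg DFunLike.coe hker) w
    simpa using this
  · rintro ⟨u, hu, hq⟩
    refine ⟨(eM.symm p, A u), ⟨⟨(eM.symm p, u), ?_⟩, rfl⟩, ?_⟩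
    · rw [mem_ker_PhiMap]
      ext w
      simpa using hq w
    · simp [Prod.ext_iff, hu]

/-- The kernel of `PsiMap` is isomorphic to `ker Q ⊓ ker A`. -/
private noncomputable def kerPsiEquiv :
    (LinearMap.ker Q ⊓ LinearMap.ker A : Submodule ℝ U) ≃ₗ[ℝ]
      LinearMap.ker (PsiMap Q A eU eM) := by
  refine LinearEquiv.ofBijective ?_ ⟨?_, ?_⟩
  · refine LinearMap.codRestrict _ (LinearMap.codRestrict _
      ((0 : _ →ₗ[ℝ] M).prod
        (LinearMap.ker Q ⊓ LinearMap.ker A).subtype) ?_) ?_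
    · rintro ⟨u, hu⟩
      rw [Submodule.mem_inf] at hu
      have h0 : Q u = 0 := hu.1
      show ((0 : M), u) ∈ LinearMap.ker (PhiMap Q A eU eM)
      rw [mem_ker_PhiMap, h0]
      simp
    · rintro ⟨u, hu⟩
      rw [Submodule.mem_inf] at hu
      have h0 : A u = 0 := hu.2
      rw [LinearMap.mem_ker]
      refine Prod.ext ?_ ?_ <;> simp [h0, PsiMap, LinearMap.codRestrict]
  · intro x y hxy
    have h3 := congrArg
      (fun z : LinearMap.ker (PsiMap Q A eU eM) => ((z : M × U)).2) hxy
    exact Subtype.ext (by simpa [LinearMap.codRestrict] using h3)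
  · rintro ⟨⟨⟨m, u⟩, hker⟩, hkerΨ⟩
    rw [LinearMap.mem_ker] at hkerΨ
    rw [mem_ker_PhiMap] at hker
    obtain ⟨hm0, hA0⟩ : m = 0 ∧ A u = 0 := by
      simpa [PsiMap, Prod.ext_iff] using hkerΨ
    have hQ0 : Q u = 0 := by rw [hker, hm0]; simp
    refine ⟨⟨u, Submodule.mem_inf.mpr ⟨hQ0, hA0⟩⟩, ?_⟩
    apply Subtype.ext; apply Subtype.ext
    exact Prod.ext (by simp [LinearMap.codRestrict, hm0]) rfl

end Aux

/-- without any regularity assumption, the space `L` is a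
Lagrangian subspace of `M* × M` with the symplectic form
`σ((δp₁,δq₁),(δp₂,δq₂)) = ⟨δp₁, δq₂⟩ - ⟨δp₂, δq₁⟩`, provided `U` is
finite-dimensional. -/
theorem Lspace_lagrangian {U M : Type*}
    [AddCommGroup U] [Module ℝ U] [FiniteDimensional ℝ U]
    [AddCommGroup M] [Module ℝ M] [FiniteDimensional ℝ M]
    (Q : U →ₗ[ℝ] Module.Dual ℝ U)
    (hQsymm : ∀ u v : U, Q u v = Q v u)
    (A : U →ₗ[ℝ] M) (lam : Module.Dual ℝ M) :
    (∀ x ∈ Lspace Q A, ∀ y ∈ Lspace Q A, x.1 y.2 - y.1 x.2 = 0) ∧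
      finrank ℝ (Lspace Q A) = finrank ℝ M := by
  constructor
  · rintro ⟨p₁, q₁⟩ ⟨u₁, hu₁, hq₁⟩ ⟨p₂, q₂⟩ ⟨u₂, hu₂, hq₂⟩
    simp only at hu₁ hu₂ hq₁ hq₂
    have e1 : p₁ q₂ = Q u₁ u₂ := by rw [← hu₂]; exact (hq₁ u₂).symm
    have e2 : p₂ q₁ = Q u₂ u₁ := by rw [← hu₁]; exact (hq₂ u₁).symm
    show p₁ q₂ - p₂ q₁ = 0
    rw [e1, e2, hQsymm, sub_self]
  · classical
    set eU : U ≃ₗ[ℝ] Module.Dual ℝ U := (Basis.ofVectorSpace ℝ U).toDualEquiv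
    set eM : M ≃ₗ[ℝ] Module.Dual ℝ M := (Basis.ofVectorSpace ℝ M).toDualEquiv
    -- the perp of `range Q ⊔ range Aᵀ` is `ker Q ⊓ ker A`
    have hWK : (LinearMap.range Q ⊔ LinearMap.range A.dualMap).dualCoannihilator
        = LinearMap.ker Q ⊓ LinearMap.ker A := by
      ext w
      rw [Submodule.mem_dualCoannihilator]
      constructor
      · intro h
        refine Submodule.mem_inf.mpr ⟨?_, ?_⟩
        · show Q w = 0
          ext u
          have := h (Q u) (Submodule.mem_sup_left (LinearMap.mem_range_self Q u))
          simpa [hQsymm w u] using this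
        · show A w = 0
          rw [← Module.forall_dual_apply_eq_zero_iff ℝ (A w)]
          intro φ
          have := h (A.dualMap φ)
            (Submodule.mem_sup_right (LinearMap.mem_range_self _ φ))
          simpa using this
      · intro hw φ hφ
        rw [Submodule.mem_sup] at hφ
        obtain ⟨y, ⟨u, rfl⟩, z, ⟨p, rfl⟩, rfl⟩ := hφ
        rw [Submodule.mem_inf] at hw
        have hw1 : Q w = 0 := hw.1
        have hw2 : A w = 0 := hw.2
        simp [hQsymm u w, hw1, hw2]
    have h1 : finrank ℝ (LinearMap.range Q ⊔ LinearMap.range A.dualMap : Submodule ℝ _)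
        + finrank ℝ (LinearMap.ker Q ⊓ LinearMap.ker A : Submodule ℝ U)
        = finrank ℝ U := by
      rw [← hWK]
      exact Subspace.finrank_add_finrank_dualCoannihilator_eq _
    have h2 : finrank ℝ (LinearMap.range Q ⊔ LinearMap.range A.dualMap : Submodule ℝ _)
        + finrank ℝ (LinearMap.ker (PhiMap Q A eU eM))
        = finrank ℝ M + finrank ℝ U := by
      have h := (PhiMap Q A eU eM).finrank_range_add_finrank_ker
      rw [range_PhiMap, Module.finrank_prod, LinearEquiv.finrank_map_eq] at h
      exact h
    have h3 : finrank ℝ (Lspace Q A)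
        + finrank ℝ (LinearMap.ker Q ⊓ LinearMap.ker A : Submodule ℝ U)
        = finrank ℝ (LinearMap.ker (PhiMap Q A eU eM)) := by
      have h := (PsiMap Q A eU eM).finrank_range_add_finrank_ker
      rw [← range_PsiMap Q A eU eM]
      rw [LinearEquiv.finrank_map_eq (eM.prodCongr (LinearEquiv.refl ℝ M))
        (LinearMap.range (PsiMap Q A eU eM))]
      rw [show finrank ℝ (LinearMap.ker Q ⊓ LinearMap.ker A : Submodule ℝ U)
          = finrank ℝ (LinearMap.ker (PsiMap Q A eU eM)) from
        (kerPsiEquiv Q A eU eM).finrank_eq]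
      exact h
    omega
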